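/- Suppose u_n ∈ W^{1,2}(X, μ) on a finite measure space with ∫|∇u_n|² dμ → 0, ‖u_n‖_{L^s} = 1 for a fixed s ∈ (1,2), and ‖u_n‖_{W^{2,s}} ≤ C uniformly. If in addition v_n ≥ 0 are uniformly bounded measurable functions with ∫ v_n dμ ≥ 1/C and ∫ v_n u_n² dμ → 0, then we reach a contradiction; i.e., no such sequence exists. -/

import Mathlib

open MeasureTheory Filter

/-- The uniform resolvent bound argument by contradiction: there is no sequence
`u_n` with Dirichlet energies (of gradients `g_n`) tending to `0`, `L^s`-norms equal
to `1` for fixed `s ∈ (1,2)`, satisfying a Poincaré inequality and a compact-embedding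
property (an `L²`-convergent subsequence, as furnished by a uniform `W^{2,s}` bound
and Sobolev compactness), together with weights `0 ≤ v_n ≤ B` of mass `≥ 1/C`
such that `∫ v_n u_n² → 0`. -/
theorem no_degenerate_sequence_for_resolvent_bound
    {X : Type*} [MeasurableSpace X] (μ : Measure X) [IsFiniteMeasure μ]
    (u g v : ℕ → X → ℝ) (s Cp C B : ℝ)
    (hs : s ∈ Set.Ioo (1:ℝ) 2) (hC : 0 < C) (hB : 0 ≤ B) (hCp : 0 ≤ Cp)
    (humeas : ∀ n, Measurable (u n)) (hvmeas : ∀ n, Measurable (v n))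
    (huint : ∀ n, Integrable (u n) μ)
    (hu2 : ∀ n, MemLp (u n) 2 μ)
    (hpoincare : ∀ n, ∫ x, (u n x - ((μ Set.univ).toReal)⁻¹ * ∫ y, u n y ∂μ) ^ 2 ∂μ
        ≤ Cp * ∫ x, (g n x) ^ 2 ∂μ)
    (hgrad : Tendsto (fun n => ∫ x, (g n x) ^ 2 ∂μ) atTop (nhds 0))
    (hLs : ∀ n, ∫ x, |u n x| ^ s ∂μ = 1)
    (hcompact : ∃ w : X → ℝ, ∃ φ : ℕ → ℕ, StrictMono φ ∧
        Tendsto (fun k => ∫ x, (u (φ k) x - w x) ^ 2 ∂μ) atTop (nhds 0))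
    (hv : ∀ n x, v n x ∈ Set.Icc (0:ℝ) B)
    (hvmass : ∀ n, 1 / C ≤ ∫ x, v n x ∂μ)
    (hvu : Tendsto (fun n => ∫ x, v n x * (u n x) ^ 2 ∂μ) atTop (nhds 0)) :
    False := by
  obtain ⟨hs1, hs2⟩ := hs
  have hs0 : 0 < s := by linarith
  set M : ℝ := (μ Set.univ).toReal with hM
  have hM0 : 0 ≤ M := ENNReal.toReal_nonneg
  set m : ℕ → ℝ := fun n => M⁻¹ * ∫ y, u n y ∂μ with hm
  set e : ℕ → ℝ := fun n => ∫ x, (u n x - m n) ^ 2 ∂μ with he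
  -- integrability facts
  have hIum : ∀ n, MemLp (fun x => u n x - m n) 2 μ := fun n =>
    (hu2 n).sub (memLp_const (m n))
  have hIe : ∀ n, Integrable (fun x => (u n x - m n) ^ 2) μ := fun n =>
    (hIum n).integrable_sq
  have hIu2 : ∀ n, Integrable (fun x => (u n x) ^ 2) μ := fun n =>
    (hu2 n).integrable_sq
  have hIv : ∀ n, Integrable (v n) μ := by
    intro n
    refine Integrable.mono' (integrable_const B) (hvmeas n).aestronglyMeasurable ?_
    filter_upwards with x
    rw [Real.norm_eq_abs, abs_of_nonneg (hv n x).1]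
    exact (hv n x).2
  -- e n → 0 by Poincaré and squeeze
  have hEnonneg : ∀ n, 0 ≤ e n := fun n =>
    integral_nonneg (fun x => sq_nonneg _)
  have hE : Tendsto e atTop (nhds 0) := by
    refine squeeze_zero hEnonneg (fun n => hpoincare n) ?_
    have := hgrad.const_mul Cp
    simpa using this
  -- m n ^ 2 → 0
  have hmsq : ∀ n, (m n) ^ 2 ≤ 2 * C * (∫ x, v n x * (u n x) ^ 2 ∂μ) + 2 * C * B * e n := by
    intro n
    have key : (m n) ^ 2 / 2 * ∫ x, v n x ∂μ - B * e n ≤ ∫ x, v n x * (u n x) ^ 2 ∂μ := by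
      have hpt : ∀ x, (m n) ^ 2 / 2 * v n x - B * (u n x - m n) ^ 2
          ≤ v n x * (u n x) ^ 2 := by
        intro x
        obtain ⟨h0, h1⟩ := hv n x
        nlinarith [sq_nonneg (m n + 2 * (u n x - m n)), sq_nonneg (u n x - m n),
          mul_le_mul_of_nonneg_left (sq_nonneg (u n x - m n)) h0,
          mul_le_mul_of_nonneg_right h1 (sq_nonneg (u n x - m n))]
      have hint : Integrable (fun x => (m n) ^ 2 / 2 * v n x - B * (u n x - m n) ^ 2) μ :=
        ((hIv n).const_mul _).sub ((hIe n).const_mul _)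
      have hintvu : Integrable (fun x => v n x * (u n x) ^ 2) μ := by
        refine Integrable.mono' ((hIu2 n).const_mul B)
          ((hvmeas n).mul ((humeas n).pow_const 2)).aestronglyMeasurable ?_
        filter_upwards with x
        rw [Real.norm_eq_abs, abs_of_nonneg (mul_nonneg (hv n x).1 (sq_nonneg _))]
        exact mul_le_mul_of_nonneg_right (hv n x).2 (sq_nonneg _)
      calc (m n) ^ 2 / 2 * ∫ x, v n x ∂μ - B * e n
          = ∫ x, ((m n) ^ 2 / 2 * v n x - B * (u n x - m n) ^ 2) ∂μ := by
            rw [integral_sub ((hIv n).const_mul _) ((hIe n).const_mul _),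
              integral_const_mul, integral_const_mul]
        _ ≤ ∫ x, v n x * (u n x) ^ 2 ∂μ := integral_mono hint hintvu hpt
    have hmass := hvmass n
    have h2 : (m n) ^ 2 / 2 * (1 / C) ≤ (m n) ^ 2 / 2 * ∫ x, v n x ∂μ :=
      mul_le_mul_of_nonneg_left hmass (by positivity)
    have h3 : (m n) ^ 2 / 2 * (1 / C) ≤ (∫ x, v n x * (u n x) ^ 2 ∂μ) + B * e n := by
      linarith
    have h5 := mul_le_mul_of_nonneg_right h3 (by positivity : (0:ℝ) ≤ 2 * C)
    have h6 : (m n) ^ 2 / 2 * (1 / C) * (2 * C) = (m n) ^ 2 := by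
      field_simp
    have h7 : ((∫ x, v n x * (u n x) ^ 2 ∂μ) + B * e n) * (2 * C)
        = 2 * C * (∫ x, v n x * (u n x) ^ 2 ∂μ) + 2 * C * B * e n := by ring
    linarith
  have hmsq0 : Tendsto (fun n => (m n) ^ 2) atTop (nhds 0) := by
    refine squeeze_zero (fun n => sq_nonneg _) hmsq ?_
    have h1 := hvu.const_mul (2 * C)
    have h2 := hE.const_mul (2 * C * B)
    simpa using h1.add h2
  -- ∫ u n ^ 2 → 0
  have hu2le : ∀ n, ∫ x, (u n x) ^ 2 ∂μ ≤ 2 * e n + 2 * (m n) ^ 2 * M := by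
    intro n
    have hpt : ∀ x, (u n x) ^ 2 ≤ 2 * (u n x - m n) ^ 2 + 2 * (m n) ^ 2 := by
      intro x; nlinarith [sq_nonneg (u n x - 2 * m n)]
    calc ∫ x, (u n x) ^ 2 ∂μ
        ≤ ∫ x, (2 * (u n x - m n) ^ 2 + 2 * (m n) ^ 2) ∂μ :=
          integral_mono (hIu2 n) (((hIe n).const_mul 2).add (integrable_const _)) hpt
      _ = 2 * e n + 2 * (m n) ^ 2 * M := by
          rw [integral_add ((hIe n).const_mul 2) (integrable_const _),
            integral_const_mul, integral_const, smul_eq_mul, measureReal_def, ← hM]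
          ring
  have hu2tendsto : Tendsto (fun n => ∫ x, (u n x) ^ 2 ∂μ) atTop (nhds 0) := by
    refine squeeze_zero (fun n => integral_nonneg fun x => sq_nonneg _) hu2le ?_
    have h1 := hE.const_mul 2
    have h2 := (hmsq0.const_mul 2).mul_const M
    have := h1.add (by simpa [mul_assoc] using h2 :
      Tendsto (fun n => 2 * (m n) ^ 2 * M) atTop (nhds 0))
    simpa using this
  -- Hölder: 1 = ∫ |u|^s ≤ (∫ u²)^(s/2) * M^((2-s)/2)
  have hconj : Real.HolderConjugate (2 / s) (2 / (2 - s)) := by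
    rw [Real.holderConjugate_iff]
    constructor
    · rw [lt_div_iff₀ hs0]; linarith
    · rw [inv_div, inv_div, ← add_div]
      norm_num
  have hHolder : ∀ n, (1:ℝ) ≤ (∫ x, (u n x) ^ 2 ∂μ) ^ (1 / (2 / s))
      * M ^ (1 / (2 / (2 - s))) := by
    intro n
    have hf : MemLp (fun x => |u n x| ^ s) (ENNReal.ofReal (2 / s)) μ := by
      have := (hu2 n).norm_rpow_div (ENNReal.ofReal s)
      have hsR : (ENNReal.ofReal s).toReal = s := ENNReal.toReal_ofReal hs0.le
      have hexp : (2 : ENNReal) / ENNReal.ofReal s = ENNReal.ofReal (2 / s) := by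
        rw [ENNReal.ofReal_div_of_pos hs0, ENNReal.ofReal_ofNat]
      rw [hsR, hexp] at this
      simpa [Real.norm_eq_abs] using this
    have hg : MemLp (fun _ : X => (1:ℝ)) (ENNReal.ofReal (2 / (2 - s))) μ :=
      memLp_const 1
    have h := integral_mul_le_Lp_mul_Lq_of_nonneg hconj
      (Filter.Eventually.of_forall fun x => Real.rpow_nonneg (abs_nonneg _) s)
      (Filter.Eventually.of_forall fun _ => zero_le_one) hf hg
    have hL : ∫ x, |u n x| ^ s * 1 ∂μ = 1 := by
      simpa using hLs n
    have hfp : ∀ x, (|u n x| ^ s) ^ (2 / s) = (u n x) ^ 2 := by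
      intro x
      rw [← Real.rpow_mul (abs_nonneg _), mul_div_cancel₀ 2 (ne_of_gt hs0),
        Real.rpow_two, sq_abs]
    have hgq : ∀ x : X, ((1:ℝ)) ^ (2 / (2 - s)) = (1:ℝ) := fun _ => Real.one_rpow _
    rw [hL] at h
    calc (1:ℝ) ≤ (∫ x, (|u n x| ^ s) ^ (2 / s) ∂μ) ^ (1 / (2 / s))
          * (∫ x, ((1:ℝ)) ^ (2 / (2 - s)) ∂μ) ^ (1 / (2 / (2 - s))) := h
      _ = (∫ x, (u n x) ^ 2 ∂μ) ^ (1 / (2 / s)) * M ^ (1 / (2 / (2 - s))) := by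
          congr 1
          · congr 1
            exact integral_congr_ae (Filter.Eventually.of_forall fun x => hfp x)
          · congr 1
            simp [integral_const, smul_eq_mul, measureReal_def, hM]
  -- RHS tends to 0, contradiction
  have hpexp : 0 < 1 / (2 / s) := by positivity
  have hRHS : Tendsto (fun n => (∫ x, (u n x) ^ 2 ∂μ) ^ (1 / (2 / s))
      * M ^ (1 / (2 / (2 - s)))) atTop (nhds 0) := by
    have h1 : Tendsto (fun n => (∫ x, (u n x) ^ 2 ∂μ) ^ (1 / (2 / s))) atTop
        (nhds ((0:ℝ) ^ (1 / (2 / s)))) :=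
      hu2tendsto.rpow_const (Or.inr hpexp.le)
    rw [Real.zero_rpow (ne_of_gt hpexp)] at h1
    simpa using h1.mul_const (M ^ (1 / (2 / (2 - s))))
  have : (1:ℝ) ≤ 0 := ge_of_tendsto' hRHS hHolder
  linarith
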